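/- arXiv:2310.08931 — 6 statements merged into one kernel-verified Lean document; each statement's English description precedes it below -/
import Mathlib

section
/- Let N ≥ 1, let f_1, …, f_N be real numbers, let E = (1/N) Σ_{i=1}^N f_i and V = (1/N) Σ_{i=1}^N (f_i − E)². Let δ > 0 satisfy E − f_k ≤ δ for every k = 1, …, N. Then the penalized χ²-divergence distributionally robust value equals the mean–variance objective: sup over q in the probability simplex Δ^N of [ Σ_{i=1}^N q_i f_i − δ·(1/(2N)) Σ_{i=1}^N (N q_i − 1)² ] = E + V/(2δ). -/
open Finset

/-- Penalized χ²-divergence DRO equals mean–variance when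
`E − f k ≤ δ` for all `k`. -/
theorem dro_chi2_penalized_eq_mean_variance
    (N : ℕ) (hN : 1 ≤ N) (f : Fin N → ℝ) (δ : ℝ) (hδ : 0 < δ)
    (E V : ℝ)
    (hE : E = (1 / (N : ℝ)) * ∑ i, f i)
    (hV : V = (1 / (N : ℝ)) * ∑ i, (f i - E) ^ 2)
    (hcond : ∀ k, E - f k ≤ δ) :
    sSup {y : ℝ | ∃ q : Fin N → ℝ, (∀ i, 0 ≤ q i) ∧ (∑ i, q i = 1) ∧
        y = (∑ i, q i * f i) -
          δ * ((1 / (2 * (N : ℝ))) * ∑ i, ((N : ℝ) * q i - 1) ^ 2)} =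
      E + V / (2 * δ) := by
  have hNpos : (0:ℝ) < N := by exact_mod_cast hN
  have hNne : (N:ℝ) ≠ 0 := ne_of_gt hNpos
  have hδne : δ ≠ 0 := ne_of_gt hδ
  have hsumf : ∑ i, f i = (N:ℝ) * E := by rw [hE]; field_simp
  have hsumg2 : ∑ i, (f i - E)^2 = (N:ℝ) * V := by rw [hV]; field_simp
  have key : ∀ q : Fin N → ℝ, (∑ i, q i = 1) →
      (∑ i, q i * f i) -
          δ * ((1 / (2 * (N : ℝ))) * ∑ i, ((N : ℝ) * q i - 1) ^ 2)
      = E + V / (2 * δ)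
        - (δ / (2 * (N:ℝ))) * ∑ i, ((N:ℝ) * q i - 1 - (f i - E)/δ)^2 := by
    intro q hq
    have expand : ∑ i, ((N:ℝ)*q i - 1 - (f i - E)/δ)^2
        = ∑ i, ((N:ℝ)*q i - 1)^2
          - (2/δ) * ∑ i, ((N:ℝ)*q i - 1)*(f i - E)
          + (1/δ^2) * ∑ i, (f i - E)^2 := by
      rw [Finset.mul_sum, Finset.mul_sum, ← Finset.sum_sub_distrib,
        ← Finset.sum_add_distrib]
      apply Finset.sum_congr rfl
      intro i _
      field_simp
      ring
    have hC : ∑ i, ((N:ℝ)*q i - 1)*(f i - E)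
        = (N:ℝ) * (∑ i, q i * f i) - (N:ℝ) * E := by
      have h1 : ∀ i ∈ Finset.univ (α := Fin N),
          ((N:ℝ)*q i - 1)*(f i - E)
          = (N:ℝ) * (q i * f i) - ((N:ℝ)*E) * q i - f i + E := by
        intro i _; ring
      rw [Finset.sum_congr rfl h1]
      have : ∑ i : Fin N, ((N:ℝ) * (q i * f i) - ((N:ℝ)*E) * q i - f i + E)
          = (N:ℝ) * (∑ i, q i * f i) - ((N:ℝ)*E) * (∑ i, q i)
            - (∑ i, f i) + (N:ℝ) * E := by
        simp [Finset.sum_add_distrib, Finset.sum_sub_distrib, Finset.mul_sum,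
          Finset.sum_mul, Finset.card_univ, mul_comm]
      rw [this, hq, hsumf]
      ring
    rw [expand, hC, hsumg2]
    field_simp
    ring
  set S : Set ℝ := {y : ℝ | ∃ q : Fin N → ℝ, (∀ i, 0 ≤ q i) ∧ (∑ i, q i = 1) ∧
        y = (∑ i, q i * f i) -
          δ * ((1 / (2 * (N : ℝ))) * ∑ i, ((N : ℝ) * q i - 1) ^ 2)} with hS
  -- the optimal q
  set qs : Fin N → ℝ := fun i => (1 + (f i - E)/δ) / N with hqs
  have hqs_nonneg : ∀ i, 0 ≤ qs i := by
    intro i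
    have : (0:ℝ) ≤ 1 + (f i - E)/δ := by
      have h1 : E - f i ≤ δ := hcond i
      have : -(1:ℝ) ≤ (f i - E)/δ := by
        rw [le_div_iff₀ hδ]
        linarith
      linarith
    exact div_nonneg this (le_of_lt hNpos)
  have hqs_sum : ∑ i, qs i = 1 := by
    simp only [hqs]
    rw [← Finset.sum_div]
    rw [Finset.sum_add_distrib, Finset.sum_const, Finset.card_univ,
      Fintype.card_fin, ← Finset.sum_div, Finset.sum_sub_distrib,
      Finset.sum_const, Finset.card_univ, Fintype.card_fin, hsumf]
    field_simp
    simp only [nsmul_eq_mul]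
    ring
  have hqs_zero : ∀ i, (N:ℝ) * qs i - 1 - (f i - E)/δ = 0 := by
    intro i
    simp only [hqs]
    field_simp
    ring
  have hmem : E + V / (2 * δ) ∈ S := by
    refine ⟨qs, hqs_nonneg, hqs_sum, ?_⟩
    rw [key qs hqs_sum]
    have : ∑ i, ((N:ℝ) * qs i - 1 - (f i - E)/δ)^2 = 0 := by
      apply Finset.sum_eq_zero
      intro i _
      rw [hqs_zero i]; ring
    rw [this]
    ring
  have hub : ∀ y ∈ S, y ≤ E + V / (2 * δ) := by
    rintro y ⟨q, _, hq1, rfl⟩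
    rw [key q hq1]
    have h1 : 0 ≤ (δ / (2 * (N:ℝ))) * ∑ i, ((N:ℝ) * q i - 1 - (f i - E)/δ)^2 := by
      apply mul_nonneg
      · positivity
      · exact Finset.sum_nonneg fun i _ => sq_nonneg _
    linarith
  apply le_antisymm
  · exact csSup_le ⟨_, hmem⟩ hub
  · exact le_csSup ⟨_, hub⟩ hmem
end

section
/- Let N ≥ 1, let f_1, …, f_N be real numbers, let E = (1/N) Σ_{i=1}^N f_i and V = (1/N) Σ_{i=1}^N (f_i − E)². Let ρ > 0 satisfy (E − f_k)·√(2ρ) ≤ √V for every k = 1, …, N. Then the hard-constrained χ²-divergence distributionally robust value equals the mean–standard-deviation objective: sup over q in the probability simplex Δ^N with (1/(2N)) Σ_{i=1}^N (N q_i − 1)² ≤ ρ of Σ_{i=1}^N q_i f_i = E + √(2ρV). -/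
open Finset

/-- Hard-constrained χ²-divergence DRO equals mean–standard-deviation when
`(E − f k)·√(2ρ) ≤ √V` for all `k`. -/
theorem dro_chi2_constrained_eq_mean_std
    (N : ℕ) (hN : 1 ≤ N) (f : Fin N → ℝ) (ρ : ℝ) (hρ : 0 < ρ)
    (E V : ℝ)
    (hE : E = (1 / (N : ℝ)) * ∑ i, f i)
    (hV : V = (1 / (N : ℝ)) * ∑ i, (f i - E) ^ 2)
    (hcond : ∀ k, (E - f k) * Real.sqrt (2 * ρ) ≤ Real.sqrt V) :
    sSup {y : ℝ | ∃ q : Fin N → ℝ, (∀ i, 0 ≤ q i) ∧ (∑ i, q i = 1) ∧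
        (1 / (2 * (N : ℝ))) * (∑ i, ((N : ℝ) * q i - 1) ^ 2) ≤ ρ ∧
        y = ∑ i, q i * f i} =
      E + Real.sqrt (2 * ρ * V) := by
  have hN0 : (0:ℝ) < N := by exact_mod_cast hN
  have hVnn : 0 ≤ V := by
    rw [hV]; positivity
  have hsum_fE : ∑ i, (f i - E) = 0 := by
    rw [Finset.sum_sub_distrib, Finset.sum_const, card_univ, Fintype.card_fin, hE]
    rw [nsmul_eq_mul, ← mul_assoc, mul_one_div_cancel hN0.ne', one_mul, sub_self]
  have hsum_sq : ∑ i, (f i - E)^2 = N * V := by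
    rw [hV]; field_simp
  have hkey : ∑ i, (f i - E) * f i = N * V := by
    have h1 : ∑ i, (f i - E) * f i = ∑ i, ((f i - E)^2 + (f i - E) * E) := by
      apply Finset.sum_congr rfl; intro i _; ring
    rw [h1, Finset.sum_add_distrib, hsum_sq, ← Finset.sum_mul, hsum_fE]; ring
  -- upper bound for every feasible point
  have hub : ∀ y ∈ {y : ℝ | ∃ q : Fin N → ℝ, (∀ i, 0 ≤ q i) ∧ (∑ i, q i = 1) ∧
      (1 / (2 * (N : ℝ))) * (∑ i, ((N : ℝ) * q i - 1) ^ 2) ≤ ρ ∧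
      y = ∑ i, q i * f i}, y ≤ E + Real.sqrt (2 * ρ * V) := by
    rintro y ⟨q, hq0, hq1, hqd, rfl⟩
    have expand : ∑ i, (q i - 1/(N:ℝ)) * (f i - E) = (∑ i, q i * f i) - E := by
      have h1 : ∀ i ∈ (univ : Finset (Fin N)),
          (q i - 1/(N:ℝ)) * (f i - E) = q i * f i - E * q i - (1/(N:ℝ)) * (f i - E) := by
        intro i _; ring
      rw [Finset.sum_congr rfl h1, Finset.sum_sub_distrib, Finset.sum_sub_distrib,
        ← Finset.mul_sum, ← Finset.mul_sum, hq1, hsum_fE]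
      ring
    have hq2 : ∑ i, (q i - 1/(N:ℝ))^2 ≤ 2*ρ/(N:ℝ) := by
      have h1 : ∑ i, ((N:ℝ) * q i - 1)^2 = (N:ℝ)^2 * ∑ i, (q i - 1/(N:ℝ))^2 := by
        rw [Finset.mul_sum]
        apply Finset.sum_congr rfl; intro i _; field_simp
      rw [h1] at hqd
      have h2 := mul_le_mul_of_nonneg_left hqd (by positivity : (0:ℝ) ≤ 2*N)
      rw [← mul_assoc] at h2
      have h3 : (2*(N:ℝ)) * (1/(2*N)) = 1 := by field_simp
      rw [h3, one_mul] at h2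
      rw [le_div_iff₀ hN0]
      nlinarith [h2, mul_pos hN0 hN0]
    have hcs : (∑ i, (q i - 1/(N:ℝ)) * (f i - E))^2 ≤
        (∑ i, (q i - 1/(N:ℝ))^2) * (∑ i, (f i - E)^2) :=
      Finset.sum_mul_sq_le_sq_mul_sq univ _ _
    have hbound : ((∑ i, q i * f i) - E)^2 ≤ 2 * ρ * V := by
      rw [← expand]
      calc (∑ i, (q i - 1/(N:ℝ)) * (f i - E))^2
          ≤ (∑ i, (q i - 1/(N:ℝ))^2) * (∑ i, (f i - E)^2) := hcs
        _ ≤ (2*ρ/(N:ℝ)) * ((N:ℝ) * V) := by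
            apply mul_le_mul hq2 (le_of_eq hsum_sq) (by positivity) (by positivity)
        _ = 2 * ρ * V := by field_simp
    have : (∑ i, q i * f i) - E ≤ Real.sqrt (2 * ρ * V) := by
      calc (∑ i, q i * f i) - E ≤ |(∑ i, q i * f i) - E| := le_abs_self _
        _ = Real.sqrt (((∑ i, q i * f i) - E)^2) := (Real.sqrt_sq_eq_abs _).symm
        _ ≤ Real.sqrt (2 * ρ * V) := Real.sqrt_le_sqrt hbound
    linarith
  apply le_antisymm
  · apply csSup_le
    · exact ⟨E, fun _ => 1/(N:ℝ), fun i => by positivity, by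
        rw [Finset.sum_const, card_univ, Fintype.card_fin, nsmul_eq_mul]; field_simp, by
        have : ∀ i ∈ (univ : Finset (Fin N)), ((N:ℝ) * (1/(N:ℝ)) - 1)^2 = 0 := by
          intro i _; field_simp; norm_num
        rw [Finset.sum_congr rfl this, Finset.sum_const]
        simp; positivity, by
        rw [hE, Finset.mul_sum]⟩
    · exact hub
  · rcases eq_or_lt_of_le hVnn with hV0 | hVpos
    · -- V = 0 case
      have hs : Real.sqrt (2 * ρ * V) = 0 := by rw [← hV0]; simp
      apply le_csSup ⟨E + Real.sqrt (2 * ρ * V), hub⟩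
      refine ⟨fun _ => 1/(N:ℝ), fun i => by positivity, by
        rw [Finset.sum_const, card_univ, Fintype.card_fin, nsmul_eq_mul]; field_simp, by
        have : ∀ i ∈ (univ : Finset (Fin N)), ((N:ℝ) * (1/(N:ℝ)) - 1)^2 = 0 := by
          intro i _; field_simp; norm_num
        rw [Finset.sum_congr rfl this, Finset.sum_const]
        simp; positivity, ?_⟩
      rw [hs, hE, Finset.mul_sum]
      simp
    · -- V > 0 case: optimal q
      set c : ℝ := Real.sqrt (2*ρ) / Real.sqrt V with hc
      have hsV : 0 < Real.sqrt V := Real.sqrt_pos.2 hVpos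
      have hsρ : 0 ≤ Real.sqrt (2*ρ) := Real.sqrt_nonneg _
      have hc2 : c^2 = 2*ρ/V := by
        rw [hc, div_pow, Real.sq_sqrt (by positivity), Real.sq_sqrt hVnn]
      have hVeq : Real.sqrt V * Real.sqrt V = V := Real.mul_self_sqrt hVnn
      have hcV : c * V = Real.sqrt (2 * ρ * V) := by
        rw [Real.sqrt_mul (by positivity), hc, ← hVeq]
        field_simp
        rw [Real.sqrt_sq (Real.sqrt_nonneg V)]
      apply le_csSup ⟨E + Real.sqrt (2 * ρ * V), hub⟩
      refine ⟨fun i => (1 + (f i - E) * c) / N, ?_, ?_, ?_, ?_⟩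
      · intro i
        have h1 : -Real.sqrt V ≤ (f i - E) * Real.sqrt (2*ρ) := by
          have := hcond i; linarith
        have h2 : -1 ≤ (f i - E) * c := by
          rw [hc, ← mul_div_assoc, le_div_iff₀ hsV]
          linarith
        have : 0 ≤ 1 + (f i - E) * c := by linarith
        positivity
      · rw [← Finset.sum_div, Finset.sum_add_distrib, ← Finset.sum_mul, hsum_fE,
          Finset.sum_const, card_univ, Fintype.card_fin]
        field_simp; simp
      · have h1 : ∀ i ∈ (univ : Finset (Fin N)),
            ((N:ℝ) * ((1 + (f i - E) * c) / N) - 1)^2 = (f i - E)^2 * c^2 := by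
          intro i _
          rw [mul_div_cancel₀ _ hN0.ne']
          ring
        rw [Finset.sum_congr rfl h1, ← Finset.sum_mul, hsum_sq, hc2]
        apply le_of_eq
        field_simp
      · have h1 : ∀ i ∈ (univ : Finset (Fin N)),
            ((1 + (f i - E) * c) / N) * f i = (1/(N:ℝ)) * f i + (c/(N:ℝ)) * ((f i - E) * f i) := by
          intro i _; field_simp
        rw [Finset.sum_congr rfl h1, Finset.sum_add_distrib, ← Finset.mul_sum,
          ← Finset.mul_sum, hkey, ← hE, ← hcV]
        field_simp
end

section
/- Let N ≥ 1, let f_1, …, f_N be real numbers and let δ > 0. Then strong Lagrangian duality holds for the penalized χ²-divergence distributionally robust problem: sup over q in the probability simplex Δ^N of [ Σ_{i=1}^N q_i f_i − δ·(1/(2N)) Σ_{i=1}^N (N q_i − 1)² ] = inf over λ ∈ ℝ of (1/N) Σ_{i=1}^N [ δ·φ*((f_i − λ)/δ) ] + λ, where φ*(s) = −½ for s < −1 and φ*(s) = ½s² + s for s ≥ −1. -/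
open Finset

/-- The conjugate of the (modified) χ²-divergence generator. -/
noncomputable def phiStar (s : ℝ) : ℝ :=
  if s < -1 then -(1 / 2) else (1 / 2) * s ^ 2 + s

lemma phiStar_ineq (s t : ℝ) (ht : 0 ≤ t) :
    t * s - (1 / 2) * (t - 1) ^ 2 ≤ phiStar s := by
  unfold phiStar
  split_ifs with h
  · nlinarith [mul_nonneg ht (by linarith : (0:ℝ) ≤ t / 2 - 1 - s)]
  · nlinarith [sq_nonneg (s - t + 1)]

lemma phiStar_eq (s : ℝ) :
    (max 0 (1 + s)) * s - (1 / 2) * (max 0 (1 + s) - 1) ^ 2 = phiStar s := by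
  unfold phiStar
  split_ifs with h
  · rw [max_eq_left (by linarith)]; ring
  · rw [max_eq_right (by linarith)]; ring

/-- Strong Lagrangian duality for the penalized χ²-divergence DRO problem. -/
theorem dro_chi2_penalized_duality
    (N : ℕ) (hN : 1 ≤ N) (f : Fin N → ℝ) (δ : ℝ) (hδ : 0 < δ) :
    sSup {y : ℝ | ∃ q : Fin N → ℝ, (∀ i, 0 ≤ q i) ∧ (∑ i, q i = 1) ∧
        y = (∑ i, q i * f i) -
          δ * ((1 / (2 * (N : ℝ))) * ∑ i, ((N : ℝ) * q i - 1) ^ 2)} =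
      sInf {y : ℝ | ∃ l : ℝ,
        y = (1 / (N : ℝ)) * (∑ i, δ * phiStar ((f i - l) / δ)) + l} := by
  haveI : Nonempty (Fin N) := ⟨⟨0, hN⟩⟩
  have hNpos : (0:ℝ) < N := by exact_mod_cast hN
  -- weak duality
  have weak : ∀ (q : Fin N → ℝ), (∀ i, 0 ≤ q i) → (∑ i, q i = 1) → ∀ l' : ℝ,
      (∑ i, q i * f i) - δ * ((1 / (2 * (N : ℝ))) * ∑ i, ((N : ℝ) * q i - 1) ^ 2)
        ≤ (1 / (N : ℝ)) * (∑ i, δ * phiStar ((f i - l') / δ)) + l' := by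
    intro q hq0 hq1 l'
    have key : ∀ i : Fin N, q i * (f i - l') - δ * ((N:ℝ) * q i - 1) ^ 2 / (2 * N)
        ≤ δ * phiStar ((f i - l') / δ) / N := by
      intro i
      have h1 := phiStar_ineq ((f i - l') / δ) ((N:ℝ) * q i)
        (mul_nonneg hNpos.le (hq0 i))
      have h2 := mul_le_mul_of_nonneg_left h1 (by positivity : (0:ℝ) ≤ δ / N)
      have e : δ / N * (((N:ℝ) * q i) * ((f i - l') / δ)
          - (1 / 2) * ((N:ℝ) * q i - 1) ^ 2)
          = q i * (f i - l') - δ * ((N:ℝ) * q i - 1) ^ 2 / (2 * N) := by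
        field_simp
      rw [e] at h2
      calc q i * (f i - l') - δ * ((N:ℝ) * q i - 1) ^ 2 / (2 * N)
          ≤ δ / N * phiStar ((f i - l') / δ) := h2
        _ = δ * phiStar ((f i - l') / δ) / N := by ring
    have hsum := Finset.sum_le_sum (fun i (_ : i ∈ univ) => key i)
    have e1 : ∑ i, (q i * (f i - l') - δ * ((N:ℝ) * q i - 1) ^ 2 / (2 * N))
        = (∑ i, q i * f i) - l'
          - δ * ((1 / (2 * (N : ℝ))) * ∑ i, ((N : ℝ) * q i - 1) ^ 2) := by
      rw [Finset.sum_sub_distrib]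
      have : ∑ i, q i * (f i - l') = (∑ i, q i * f i) - (∑ i, q i) * l' := by
        rw [Finset.sum_mul, ← Finset.sum_sub_distrib]
        exact Finset.sum_congr rfl fun i _ => by ring
      rw [this, hq1, Finset.mul_sum, Finset.mul_sum]
      rw [show (∑ i, δ * ((N:ℝ) * q i - 1) ^ 2 / (2 * N))
          = ∑ i, δ * (1 / (2 * (N:ℝ)) * ((N:ℝ) * q i - 1) ^ 2) from
        Finset.sum_congr rfl fun i _ => by ring]
      ring
    have e2 : ∑ i, δ * phiStar ((f i - l') / δ) / (N:ℝ)
        = (1 / (N : ℝ)) * (∑ i, δ * phiStar ((f i - l') / δ)) := by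
      rw [Finset.mul_sum]
      exact Finset.sum_congr rfl fun i _ => by ring
    rw [e1, e2] at hsum
    linarith
  -- find the optimal multiplier via IVT
  set g : ℝ → ℝ := fun l => ∑ i, max 0 (1 + (f i - l) / δ) with hg
  have hcont : Continuous g := by
    apply continuous_finset_sum
    intro i _
    exact continuous_const.max (by fun_prop)
  set a := univ.inf' univ_nonempty f with ha
  set b := univ.sup' univ_nonempty f + δ with hb
  have hga : (N:ℝ) ≤ g a := by
    have : ∀ i : Fin N, (1:ℝ) ≤ max 0 (1 + (f i - a) / δ) := by
      intro i
      have hfa : a ≤ f i := Finset.inf'_le f (Finset.mem_univ i)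
      have : (0:ℝ) ≤ (f i - a) / δ := div_nonneg (by linarith) hδ.le
      exact le_max_of_le_right (by linarith)
    calc (N:ℝ) = ∑ _i : Fin N, (1:ℝ) := by simp
      _ ≤ g a := Finset.sum_le_sum fun i _ => this i
  have hgb : g b = 0 := by
    apply Finset.sum_eq_zero
    intro i _
    have hfb : f i ≤ univ.sup' univ_nonempty f := Finset.le_sup' f (Finset.mem_univ i)
    have h1 : (f i - b) / δ ≤ -1 := by
      rw [div_le_iff₀ hδ]
      simp only [hb]
      linarith
    exact max_eq_left (by linarith)
  have hab : a ≤ b := by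
    have : univ.inf' univ_nonempty f ≤ univ.sup' univ_nonempty f :=
      le_trans (Finset.inf'_le f (Finset.mem_univ (Classical.arbitrary (Fin N))))
        (Finset.le_sup' f (Finset.mem_univ (Classical.arbitrary (Fin N))))
    simp only [ha, hb]; linarith
  have hmem : (N:ℝ) ∈ Set.Icc (g b) (g a) := ⟨by rw [hgb]; exact hNpos.le, hga⟩
  obtain ⟨l, _, hgl⟩ := intermediate_value_Icc' hab hcont.continuousOn hmem
  -- optimal q
  set q : Fin N → ℝ := fun i => max 0 (1 + (f i - l) / δ) / N with hqdef
  have hq0 : ∀ i, 0 ≤ q i := fun i => by positivity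
  have hNq : ∀ i, (N:ℝ) * q i = max 0 (1 + (f i - l) / δ) := by
    intro i
    simp only [hqdef]
    field_simp
  have hq1 : ∑ i, q i = 1 := by
    have : ∑ i, q i = g l / N := by
      rw [hg, Finset.sum_div]
    rw [this, hgl, div_self hNpos.ne']
  set D : ℝ := (1 / (N : ℝ)) * (∑ i, δ * phiStar ((f i - l) / δ)) + l with hD
  -- strong duality : the primal value at q equals D
  have keyeq : ∀ i : Fin N, q i * (f i - l) - δ * ((N:ℝ) * q i - 1) ^ 2 / (2 * N)
      = δ * phiStar ((f i - l) / δ) / N := by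
    intro i
    have h1 := phiStar_eq ((f i - l) / δ)
    have e : δ / N * ((max 0 (1 + (f i - l) / δ)) * ((f i - l) / δ)
        - (1 / 2) * ((max 0 (1 + (f i - l) / δ)) - 1) ^ 2)
        = q i * (f i - l) - δ * ((N:ℝ) * q i - 1) ^ 2 / (2 * N) := by
      rw [← hNq i]
      have hq : q i = ((N:ℝ) * q i) / N := by field_simp
      rw [show q i * (f i - l) = ((N:ℝ) * q i) / N * (f i - l) from by
        rw [← hq]]
      field_simp
    rw [← e, h1]
    ring
  have strong : (∑ i, q i * f i)
      - δ * ((1 / (2 * (N : ℝ))) * ∑ i, ((N : ℝ) * q i - 1) ^ 2) = D := by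
    have hsum : ∑ i, (q i * (f i - l) - δ * ((N:ℝ) * q i - 1) ^ 2 / (2 * N))
        = ∑ i, δ * phiStar ((f i - l) / δ) / (N:ℝ) :=
      Finset.sum_congr rfl fun i _ => keyeq i
    have e1 : ∑ i, (q i * (f i - l) - δ * ((N:ℝ) * q i - 1) ^ 2 / (2 * N))
        = (∑ i, q i * f i) - l
          - δ * ((1 / (2 * (N : ℝ))) * ∑ i, ((N : ℝ) * q i - 1) ^ 2) := by
      rw [Finset.sum_sub_distrib]
      have : ∑ i, q i * (f i - l) = (∑ i, q i * f i) - (∑ i, q i) * l := by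
        rw [Finset.sum_mul, ← Finset.sum_sub_distrib]
        exact Finset.sum_congr rfl fun i _ => by ring
      rw [this, hq1, Finset.mul_sum, Finset.mul_sum]
      rw [show (∑ i, δ * ((N:ℝ) * q i - 1) ^ 2 / (2 * N))
          = ∑ i, δ * (1 / (2 * (N:ℝ)) * ((N:ℝ) * q i - 1) ^ 2) from
        Finset.sum_congr rfl fun i _ => by ring]
      ring
    have e2 : ∑ i, δ * phiStar ((f i - l) / δ) / (N:ℝ)
        = (1 / (N : ℝ)) * (∑ i, δ * phiStar ((f i - l) / δ)) := by
      rw [Finset.mul_sum]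
      exact Finset.sum_congr rfl fun i _ => by ring
    rw [e1, e2] at hsum
    rw [hD]
    linarith
  -- set memberships
  have hDS : D ∈ {y : ℝ | ∃ q : Fin N → ℝ, (∀ i, 0 ≤ q i) ∧ (∑ i, q i = 1) ∧
      y = (∑ i, q i * f i) -
        δ * ((1 / (2 * (N : ℝ))) * ∑ i, ((N : ℝ) * q i - 1) ^ 2)} :=
    ⟨q, hq0, hq1, strong.symm⟩
  have hDT : D ∈ {y : ℝ | ∃ l : ℝ,
      y = (1 / (N : ℝ)) * (∑ i, δ * phiStar ((f i - l) / δ)) + l} := ⟨l, rfl⟩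
  apply le_antisymm
  · apply csSup_le ⟨D, hDS⟩
    intro y hy
    obtain ⟨q', hq'0, hq'1, rfl⟩ := hy
    apply le_csInf ⟨D, hDT⟩
    intro z hz
    obtain ⟨l', rfl⟩ := hz
    exact weak q' hq'0 hq'1 l'
  · calc sInf {y : ℝ | ∃ l : ℝ,
        y = (1 / (N : ℝ)) * (∑ i, δ * phiStar ((f i - l) / δ)) + l}
        ≤ D := csInf_le ⟨D, fun z hz => by
          obtain ⟨l', rfl⟩ := hz
          rw [← strong]
          exact weak q hq0 hq1 l'⟩ hDT
      _ ≤ sSup _ := le_csSup ⟨D, fun y hy => by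
          obtain ⟨q', hq'0, hq'1, rfl⟩ := hy
          rw [hD]
          exact weak q' hq'0 hq'1 l⟩ hDS
end

section
/- Let N ≥ 1, let f_1, …, f_N be real numbers and let ρ > 0. Then strong Lagrangian duality holds for the hard-constrained χ²-divergence distributionally robust problem: sup over q in the probability simplex Δ^N with (1/(2N)) Σ_{i=1}^N (N q_i − 1)² ≤ ρ of Σ_{i=1}^N q_i f_i = inf over λ ∈ ℝ and ν > 0 of (ν/N) Σ_{i=1}^N φ*((f_i − λ)/ν) + λ + νρ, where φ*(s) = −½ for s < −1 and φ*(s) = ½s² + s for s ≥ −1. -/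
open Finset

lemma fenchel_young (s t : ℝ) (ht : 0 ≤ t) :
    s * t - (1/2) * (t - 1)^2 ≤ phiStar s := by
  unfold phiStar
  split_ifs with h
  · nlinarith [sq_nonneg t, sq_nonneg (t-1)]
  · nlinarith [sq_nonneg (s - t + 1)]

lemma weak_duality (N : ℕ) (hN : 1 ≤ N) (f : Fin N → ℝ) (ρ : ℝ)
    (q : Fin N → ℝ) (hq0 : ∀ i, 0 ≤ q i) (hq1 : ∑ i, q i = 1)
    (hqd : (1 / (2 * (N : ℝ))) * (∑ i, ((N : ℝ) * q i - 1) ^ 2) ≤ ρ)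
    (l ν : ℝ) (hν : 0 < ν) :
    ∑ i, q i * f i ≤ (ν / (N : ℝ)) * (∑ i, phiStar ((f i - l) / ν)) + l + ν * ρ := by
  have hNpos : (0:ℝ) < N := by exact_mod_cast hN
  have key : ∀ i : Fin N,
      (f i - l) * q i - (ν / (2 * N)) * ((N : ℝ) * q i - 1)^2 ≤
        (ν / N) * phiStar ((f i - l) / ν) := by
    intro i
    have h := fenchel_young ((f i - l) / ν) ((N:ℝ) * q i)
      (mul_nonneg (le_of_lt hNpos) (hq0 i))
    have hνN : (0:ℝ) ≤ ν / N := by positivity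
    have h2 := mul_le_mul_of_nonneg_left h hνN
    calc (f i - l) * q i - (ν / (2 * N)) * ((N : ℝ) * q i - 1)^2
        = (ν / N) * (((f i - l) / ν) * ((N:ℝ) * q i) - (1/2) * ((N:ℝ) * q i - 1)^2) := by
          field_simp
      _ ≤ (ν / N) * phiStar ((f i - l) / ν) := h2
  have hsum := Finset.sum_le_sum (fun i (_ : i ∈ Finset.univ) => key i)
  have e1 : ∑ i, ((f i - l) * q i - (ν / (2 * N)) * ((N : ℝ) * q i - 1)^2)
      = (∑ i, q i * f i) - l - (ν / (2 * N)) * ∑ i, ((N : ℝ) * q i - 1)^2 := by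
    rw [Finset.sum_sub_distrib, ← Finset.mul_sum]
    have : ∑ i, (f i - l) * q i = (∑ i, q i * f i) - ∑ i, l * q i := by
      rw [← Finset.sum_sub_distrib]; exact Finset.sum_congr rfl (fun i _ => by ring)
    rw [this, ← Finset.mul_sum, hq1]; ring
  have e2 : ∑ i, ((ν / (N:ℝ)) * phiStar ((f i - l) / ν))
      = (ν / (N : ℝ)) * ∑ i, phiStar ((f i - l) / ν) := by
    rw [Finset.mul_sum]
  have h2 : (ν / (2 * N)) * (∑ i, ((N : ℝ) * q i - 1)^2) ≤ ν * ρ := by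
    have h3 := mul_le_mul_of_nonneg_left hqd (le_of_lt hν)
    calc (ν / (2 * N)) * (∑ i, ((N : ℝ) * q i - 1)^2)
        = ν * ((1 / (2 * (N:ℝ))) * (∑ i, ((N : ℝ) * q i - 1)^2)) := by ring
      _ ≤ ν * ρ := h3
  rw [e1, e2] at hsum
  linarith


lemma dual_attain (N : ℕ) (hN : 1 ≤ N) (f : Fin N → ℝ) (ν : ℝ) (hν : 0 < ν) :
    ∃ l : ℝ, ∃ q : Fin N → ℝ, (∀ i, 0 ≤ q i) ∧ (∑ i, q i = 1) ∧
      (ν / (N:ℝ)) * (∑ i, phiStar ((f i - l) / ν)) + l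
        = ∑ i, q i * f i - ν * ((1 / (2 * (N:ℝ))) * ∑ i, ((N:ℝ) * q i - 1)^2) := by
  haveI : Nonempty (Fin N) := ⟨⟨0, hN⟩⟩
  have hNpos : (0:ℝ) < N := by exact_mod_cast hN
  have hNne : (N:ℝ) ≠ 0 := ne_of_gt hNpos
  set g : ℝ → ℝ := fun l => ∑ i, max 0 ((f i - l)/ν + 1) with hg
  have hgc : Continuous g := by
    apply continuous_finset_sum
    intro i _
    exact continuous_const.max (((continuous_const.sub continuous_id).div_const ν).add
      continuous_const)
  set l0 : ℝ := Finset.univ.inf' Finset.univ_nonempty f with hl0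
  set l1 : ℝ := Finset.univ.sup' Finset.univ_nonempty f + ν with hl1
  have hsup : ∀ i, f i ≤ Finset.univ.sup' Finset.univ_nonempty f :=
    fun i => Finset.le_sup' f (Finset.mem_univ i)
  have hinf : ∀ i, l0 ≤ f i := fun i => Finset.inf'_le _ (Finset.mem_univ i)
  have hle : l0 ≤ l1 := by
    have i0 : Fin N := Classical.arbitrary _
    have := hsup i0; have := hinf i0; linarith
  have hg0 : (N:ℝ) ≤ g l0 := by
    have hterm : ∀ i : Fin N, (1:ℝ) ≤ max 0 ((f i - l0)/ν + 1) := by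
      intro i
      have h1 := hinf i
      have h2 : (0:ℝ) ≤ (f i - l0)/ν := div_nonneg (by linarith) hν.le
      exact le_trans (by linarith) (le_max_right _ _)
    calc (N:ℝ) = ∑ _i : Fin N, (1:ℝ) := by simp
      _ ≤ g l0 := Finset.sum_le_sum (fun i _ => hterm i)
  have hg1 : g l1 ≤ (N:ℝ) := by
    have hterm : ∀ i : Fin N, max 0 ((f i - l1)/ν + 1) = 0 := by
      intro i
      have h1 : f i - l1 ≤ -ν := by have := hsup i; linarith
      have h2 : (f i - l1)/ν ≤ -1 := by
        rw [div_le_iff₀ hν]; linarith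
      exact max_eq_left (by linarith)
    have : g l1 = 0 := by
      rw [hg]; exact Finset.sum_eq_zero (fun i _ => hterm i)
    rw [this]; positivity
  obtain ⟨l, _, hgl⟩ := intermediate_value_Icc' hle hgc.continuousOn ⟨hg1, hg0⟩
  have hgl' : (∑ i, max 0 ((f i - l)/ν + 1)) = (N:ℝ) := hgl
  refine ⟨l, fun i => max 0 ((f i - l)/ν + 1) / N,
    fun i => by positivity, ?_, ?_⟩
  · rw [← Finset.sum_div, hgl']; exact div_self hNne
  · simp only []
    have key : ∀ i : Fin N, (ν / (N:ℝ)) * phiStar ((f i - l)/ν)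
        = (f i - l) * (max 0 ((f i - l)/ν + 1) / N)
          - (ν/(2*(N:ℝ))) * ((N:ℝ) * (max 0 ((f i - l)/ν + 1) / N) - 1)^2 := by
      intro i
      set s := (f i - l)/ν with hs
      have hfl : f i - l = ν * s := by rw [hs]; field_simp
      unfold phiStar
      split_ifs with h
      · rw [max_eq_left (by linarith : s + 1 ≤ 0)]
        have e : (N:ℝ) * ((0:ℝ) / N) = 0 := by field_simp
        rw [e]; ring
      · push_neg at h
        rw [max_eq_right (by linarith : (0:ℝ) ≤ s + 1)]
        have e : (N:ℝ) * ((s+1) / N) = s + 1 := by field_simp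
        rw [e, hfl]; ring
    have hsum : (ν / (N:ℝ)) * ∑ i, phiStar ((f i - l)/ν)
        = ∑ i, ((f i - l) * (max 0 ((f i - l)/ν + 1) / N)
          - (ν/(2*(N:ℝ))) * ((N:ℝ) * (max 0 ((f i - l)/ν + 1) / N) - 1)^2) := by
      rw [Finset.mul_sum]; exact Finset.sum_congr rfl (fun i _ => key i)
    rw [hsum, Finset.sum_sub_distrib, ← Finset.mul_sum]
    have hq1 : ∑ i, max 0 ((f i - l)/ν + 1) / (N:ℝ) = 1 := by
      rw [← Finset.sum_div, hgl']; exact div_self hNne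
    have e : ∑ i, (f i - l) * (max 0 ((f i - l)/ν + 1) / (N:ℝ))
        = (∑ i, (max 0 ((f i - l)/ν + 1) / (N:ℝ)) * f i) - l := by
      have e2 : ∑ i, (f i - l) * (max 0 ((f i - l)/ν + 1) / (N:ℝ))
          = ∑ i, ((max 0 ((f i - l)/ν + 1) / (N:ℝ)) * f i - l * (max 0 ((f i - l)/ν + 1) / (N:ℝ))) :=
        Finset.sum_congr rfl (fun i _ => by ring)
      rw [e2, Finset.sum_sub_distrib, ← Finset.mul_sum, hq1]; ring
    rw [e]; ring

noncomputable def pert (N : ℕ) (f : Fin N → ℝ) (ρ : ℝ) (u : ℝ) : ℝ :=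
  sSup {y | ∃ q : Fin N → ℝ, (∀ i, 0 ≤ q i) ∧ (∑ i, q i = 1) ∧
    (1 / (2 * (N : ℝ))) * (∑ i, ((N : ℝ) * q i - 1) ^ 2) ≤ ρ + u ∧ y = ∑ i, q i * f i}

lemma pert_bddAbove (N : ℕ) (hN : 1 ≤ N) (f : Fin N → ℝ) (ρ u : ℝ) :
    BddAbove {y | ∃ q : Fin N → ℝ, (∀ i, 0 ≤ q i) ∧ (∑ i, q i = 1) ∧
    (1 / (2 * (N : ℝ))) * (∑ i, ((N : ℝ) * q i - 1) ^ 2) ≤ ρ + u ∧ y = ∑ i, q i * f i} := by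
  haveI : Nonempty (Fin N) := ⟨⟨0, hN⟩⟩
  refine ⟨Finset.univ.sup' Finset.univ_nonempty f, ?_⟩
  rintro y ⟨q, hq0, hq1, -, rfl⟩
  calc ∑ i, q i * f i ≤ ∑ i, q i * Finset.univ.sup' Finset.univ_nonempty f :=
        Finset.sum_le_sum (fun i _ => mul_le_mul_of_nonneg_left
          (Finset.le_sup' f (Finset.mem_univ i)) (hq0 i))
    _ = Finset.univ.sup' Finset.univ_nonempty f := by rw [← Finset.sum_mul, hq1, one_mul]

lemma pert_nonempty (N : ℕ) (hN : 1 ≤ N) (f : Fin N → ℝ) (ρ u : ℝ) (hu : -ρ ≤ u) :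
    Set.Nonempty {y | ∃ q : Fin N → ℝ, (∀ i, 0 ≤ q i) ∧ (∑ i, q i = 1) ∧
    (1 / (2 * (N : ℝ))) * (∑ i, ((N : ℝ) * q i - 1) ^ 2) ≤ ρ + u ∧ y = ∑ i, q i * f i} := by
  have hNpos : (0:ℝ) < N := by exact_mod_cast hN
  have hNne : (N:ℝ) ≠ 0 := ne_of_gt hNpos
  refine ⟨∑ i, (1/(N:ℝ)) * f i, fun _ => 1/(N:ℝ), fun i => by positivity, ?_, ?_, rfl⟩
  · rw [Finset.sum_const]; simp; field_simp
  · have : ∀ i : Fin N, ((N:ℝ) * (1/(N:ℝ)) - 1)^2 = 0 := by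
      intro i; rw [mul_one_div, div_self hNne]; ring
    rw [Finset.sum_congr rfl (fun i _ => this i)]
    simp; linarith

lemma pert_mono (N : ℕ) (hN : 1 ≤ N) (f : Fin N → ℝ) (ρ : ℝ) {u v : ℝ}
    (hu : -ρ ≤ u) (huv : u ≤ v) : pert N f ρ u ≤ pert N f ρ v := by
  apply csSup_le_csSup (pert_bddAbove N hN f ρ v) (pert_nonempty N hN f ρ u hu)
  rintro y ⟨q, hq0, hq1, hd, rfl⟩
  exact ⟨q, hq0, hq1, by linarith, rfl⟩

set_option maxHeartbeats 1000000 in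
lemma pert_concave (N : ℕ) (hN : 1 ≤ N) (f : Fin N → ℝ) (ρ : ℝ) {a b : ℝ}
    (ha : -ρ ≤ a) (ha0 : a < 0) (hb : 0 < b) :
    b * pert N f ρ a - a * pert N f ρ b ≤ (b - a) * pert N f ρ 0 := by
  have hba : 0 < b - a := by linarith
  apply le_of_forall_pos_le_add
  intro ε hε
  set δ := ε / (b - a) with hδ
  have hδpos : 0 < δ := by positivity
  have hna := pert_nonempty N hN f ρ a ha
  have hnb := pert_nonempty N hN f ρ b (by linarith)
  obtain ⟨ya, hya, hya2⟩ := exists_lt_of_lt_csSup hna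
    (show pert N f ρ a - δ < pert N f ρ a by linarith)
  obtain ⟨yb, hyb, hyb2⟩ := exists_lt_of_lt_csSup hnb
    (show pert N f ρ b - δ < pert N f ρ b by linarith)
  obtain ⟨qa, hqa0, hqa1, hqad, rfl⟩ := hya
  obtain ⟨qb, hqb0, hqb1, hqbd, rfl⟩ := hyb
  set t := b / (b - a) with ht
  set s := -a / (b - a) with hs
  have htpos : 0 < t := by positivity
  have hspos : 0 < s := div_pos (neg_pos.mpr ha0) hba
  have hts : t + s = 1 := by rw [ht, hs]; field_simp; ring
  have hNnn : (0:ℝ) ≤ 1 / (2 * (N:ℝ)) := by positivity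
  set q : Fin N → ℝ := fun i => t * qa i + s * qb i with hq
  have hq0 : ∀ i, 0 ≤ q i := fun i =>
    add_nonneg (mul_nonneg htpos.le (hqa0 i)) (mul_nonneg hspos.le (hqb0 i))
  have hq1 : ∑ i, q i = 1 := by
    rw [hq]; simp only []
    rw [Finset.sum_add_distrib, ← Finset.mul_sum, ← Finset.mul_sum, hqa1, hqb1]
    rw [mul_one, mul_one]; exact hts
  have hqd : (1 / (2 * (N : ℝ))) * (∑ i, ((N : ℝ) * q i - 1) ^ 2) ≤ ρ + 0 := by
    have hper : ∀ i : Fin N, ((N:ℝ) * q i - 1)^2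
        ≤ t * ((N:ℝ) * qa i - 1)^2 + s * ((N:ℝ) * qb i - 1)^2 := by
      intro i
      have h1 : (N:ℝ) * q i - 1 = t * ((N:ℝ) * qa i - 1) + s * ((N:ℝ) * qb i - 1) := by
        rw [hq]; simp only []; nlinarith [hts]
      rw [h1]
      nlinarith [mul_nonneg (mul_nonneg htpos.le hspos.le)
        (sq_nonneg (((N:ℝ) * qa i - 1) - ((N:ℝ) * qb i - 1))), hts]
    have hsum : ∑ i, ((N:ℝ) * q i - 1)^2
        ≤ t * (∑ i, ((N:ℝ) * qa i - 1)^2) + s * (∑ i, ((N:ℝ) * qb i - 1)^2) := by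
      rw [Finset.mul_sum, Finset.mul_sum, ← Finset.sum_add_distrib]
      exact Finset.sum_le_sum (fun i _ => hper i)
    have h2 := mul_le_mul_of_nonneg_left hsum hNnn
    have h3 : (1 / (2 * (N:ℝ))) * (t * (∑ i, ((N:ℝ) * qa i - 1)^2)
        + s * (∑ i, ((N:ℝ) * qb i - 1)^2))
        = t * ((1 / (2 * (N:ℝ))) * ∑ i, ((N:ℝ) * qa i - 1)^2)
          + s * ((1 / (2 * (N:ℝ))) * ∑ i, ((N:ℝ) * qb i - 1)^2) := by ring
    have h4 : t * (ρ + a) + s * (ρ + b) = ρ := by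
      rw [ht, hs]; field_simp; ring
    have h5 : t * ((1 / (2 * (N:ℝ))) * ∑ i, ((N:ℝ) * qa i - 1)^2)
        ≤ t * (ρ + a) := mul_le_mul_of_nonneg_left hqad htpos.le
    have h6 : s * ((1 / (2 * (N:ℝ))) * ∑ i, ((N:ℝ) * qb i - 1)^2)
        ≤ s * (ρ + b) := mul_le_mul_of_nonneg_left hqbd hspos.le
    linarith
  have hmem : (∑ i, q i * f i) ∈ {y | ∃ q : Fin N → ℝ, (∀ i, 0 ≤ q i) ∧ (∑ i, q i = 1) ∧
      (1 / (2 * (N : ℝ))) * (∑ i, ((N : ℝ) * q i - 1) ^ 2) ≤ ρ + 0 ∧ y = ∑ i, q i * f i} :=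
    ⟨q, hq0, hq1, hqd, rfl⟩
  have hle : ∑ i, q i * f i ≤ pert N f ρ 0 :=
    le_csSup (pert_bddAbove N hN f ρ 0) hmem
  have hval : ∑ i, q i * f i = t * (∑ i, qa i * f i) + s * (∑ i, qb i * f i) := by
    rw [Finset.mul_sum, Finset.mul_sum, ← Finset.sum_add_distrib]
    exact Finset.sum_congr rfl (fun i _ => by rw [hq]; ring)
  have hcomb : t * (pert N f ρ a - δ) + s * (pert N f ρ b - δ) ≤ pert N f ρ 0 := by
    rw [hval] at hle
    have := add_le_add (mul_le_mul_of_nonneg_left hya2.le htpos.le)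
      (mul_le_mul_of_nonneg_left hyb2.le hspos.le)
    linarith
  have e : (b - a) * (t * (pert N f ρ a - δ) + s * (pert N f ρ b - δ))
      = b * pert N f ρ a - a * pert N f ρ b - ε := by
    rw [ht, hs, hδ]; field_simp; ring
  have := mul_le_mul_of_nonneg_left hcomb hba.le
  rw [e] at this
  linarith



lemma pert_support (N : ℕ) (hN : 1 ≤ N) (f : Fin N → ℝ) (ρ : ℝ) (hρ : 0 < ρ) :
    ∃ ν : ℝ, 0 ≤ ν ∧ ∀ u, -ρ ≤ u → pert N f ρ u ≤ pert N f ρ 0 + ν * u := by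
  set p := pert N f ρ with hp
  set S := {x : ℝ | ∃ u : ℝ, 0 < u ∧ x = (p u - p 0) / u} with hS
  have hSne : S.Nonempty := ⟨(p 1 - p 0) / 1, 1, one_pos, rfl⟩
  have hhalf : -ρ ≤ -(ρ/2) := by linarith
  have hhalf0 : -(ρ/2) < 0 := by linarith
  have hSbdd : BddAbove S := by
    refine ⟨(p 0 - p (-(ρ/2))) / (ρ/2), ?_⟩
    rintro x ⟨u, hu, rfl⟩
    rw [div_le_div_iff₀ hu (by linarith : (0:ℝ) < ρ/2)]
    have c := pert_concave N hN f ρ hhalf hhalf0 hu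
    nlinarith [c]
  set ν := sSup S with hν
  have hν0 : 0 ≤ ν := by
    have hmem : (p 1 - p 0) / 1 ∈ S := ⟨1, one_pos, rfl⟩
    have h1 : p 0 ≤ p 1 := pert_mono N hN f ρ (by linarith) (by linarith)
    have := le_csSup hSbdd hmem
    have h2 : (0:ℝ) ≤ (p 1 - p 0) / 1 := by simp; linarith
    linarith
  refine ⟨ν, hν0, fun u hu => ?_⟩
  rcases lt_trichotomy u 0 with h | h | h
  · have hub : ∀ x ∈ S, x ≤ (p 0 - p u) / (-u) := by
      rintro x ⟨u', hu', rfl⟩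
      rw [div_le_div_iff₀ hu' (by linarith : (0:ℝ) < -u)]
      have c := pert_concave N hN f ρ hu h hu'
      nlinarith [c]
    have h1 : ν ≤ (p 0 - p u) / (-u) := csSup_le hSne hub
    have h2 : ν * (-u) ≤ p 0 - p u := by
      rw [← le_div_iff₀ (by linarith : (0:ℝ) < -u)]; exact h1
    nlinarith
  · subst h; simp
  · have hmem : (p u - p 0) / u ∈ S := ⟨u, h, rfl⟩
    have h1 : (p u - p 0) / u ≤ ν := le_csSup hSbdd hmem
    have h2 : p u - p 0 ≤ ν * u := by
      rw [← div_le_iff₀ h]; exact h1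
    linarith


/-- Strong Lagrangian duality for the hard-constrained χ²-divergence DRO problem. -/
theorem dro_chi2_constrained_duality
    (N : ℕ) (hN : 1 ≤ N) (f : Fin N → ℝ) (ρ : ℝ) (hρ : 0 < ρ) :
    sSup {y : ℝ | ∃ q : Fin N → ℝ, (∀ i, 0 ≤ q i) ∧ (∑ i, q i = 1) ∧
        (1 / (2 * (N : ℝ))) * (∑ i, ((N : ℝ) * q i - 1) ^ 2) ≤ ρ ∧
        y = ∑ i, q i * f i} =
      sInf {y : ℝ | ∃ l ν : ℝ, 0 < ν ∧
        y = (ν / (N : ℝ)) * (∑ i, phiStar ((f i - l) / ν)) + l + ν * ρ} := by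
  set Pset := {y : ℝ | ∃ q : Fin N → ℝ, (∀ i, 0 ≤ q i) ∧ (∑ i, q i = 1) ∧
      (1 / (2 * (N : ℝ))) * (∑ i, ((N : ℝ) * q i - 1) ^ 2) ≤ ρ ∧
      y = ∑ i, q i * f i} with hPset
  set Dset := {y : ℝ | ∃ l ν : ℝ, 0 < ν ∧
      y = (ν / (N : ℝ)) * (∑ i, phiStar ((f i - l) / ν)) + l + ν * ρ} with hDset
  -- Pset is the level-0 perturbation set
  have hP0set : Pset = {y : ℝ | ∃ q : Fin N → ℝ, (∀ i, 0 ≤ q i) ∧ (∑ i, q i = 1) ∧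
      (1 / (2 * (N : ℝ))) * (∑ i, ((N : ℝ) * q i - 1) ^ 2) ≤ ρ + 0 ∧
      y = ∑ i, q i * f i} := by rw [hPset]; norm_num
  have hPne : Pset.Nonempty := by rw [hP0set]; exact pert_nonempty N hN f ρ 0 (by linarith)
  have hPbdd : BddAbove Pset := by rw [hP0set]; exact pert_bddAbove N hN f ρ 0
  have hP0 : sSup Pset = pert N f ρ 0 := by rw [hP0set, pert]
  have hDne : Dset.Nonempty :=
    ⟨(1 / (N : ℝ)) * (∑ i, phiStar ((f i - 0) / 1)) + 0 + 1 * ρ, 0, 1, one_pos, rfl⟩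
  -- weak duality : every primal value ≤ every dual value
  have hweak : ∀ y ∈ Pset, ∀ d ∈ Dset, y ≤ d := by
    rintro y ⟨q, hq0, hq1, hqd, rfl⟩ d ⟨l, ν, hν, rfl⟩
    exact weak_duality N hN f ρ q hq0 hq1 hqd l ν hν
  obtain ⟨y0, hy0⟩ := hPne
  have hDbdd : BddBelow Dset := ⟨y0, fun d hd => hweak y0 hy0 d hd⟩
  apply le_antisymm
  · exact le_csInf hDne (fun d hd => csSup_le ⟨y0, hy0⟩ (fun y hy => hweak y hy d hd))
  · -- strong duality
    apply le_of_forall_pos_le_add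
    intro ε hε
    obtain ⟨ν0, hν00, hsupp⟩ := pert_support N hN f ρ hρ
    set ν' := ν0 + ε / (2 * ρ) with hν'
    have hν'pos : 0 < ν' := by
      rw [hν']
      exact add_pos_of_nonneg_of_pos hν00 (by positivity)
    obtain ⟨l, q, hq0, hq1, heq⟩ := dual_attain N hN f ν' hν'pos
    set dq := (1 / (2 * (N:ℝ))) * ∑ i, ((N:ℝ) * q i - 1)^2 with hdq
    have hdq0 : 0 ≤ dq := by rw [hdq]; positivity
    set u := dq - ρ with hu
    have huρ : -ρ ≤ u := by rw [hu]; linarith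
    -- q is feasible for perturbation level u
    have hmem : (∑ i, q i * f i) ∈ {y : ℝ | ∃ q : Fin N → ℝ, (∀ i, 0 ≤ q i) ∧
        (∑ i, q i = 1) ∧
        (1 / (2 * (N : ℝ))) * (∑ i, ((N : ℝ) * q i - 1) ^ 2) ≤ ρ + u ∧
        y = ∑ i, q i * f i} := ⟨q, hq0, hq1, by rw [hu, ← hdq]; linarith, rfl⟩
    have hqf : ∑ i, q i * f i ≤ pert N f ρ u :=
      le_csSup (pert_bddAbove N hN f ρ u) hmem
    have hchain : pert N f ρ u ≤ pert N f ρ 0 + ν0 * u := hsupp u huρ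
    -- dual value at (l, ν')
    have hdval : (ν' / (N : ℝ)) * (∑ i, phiStar ((f i - l) / ν')) + l + ν' * ρ
        = (∑ i, q i * f i) - ν' * u := by
      rw [hu, hdq]; rw [heq]; ring
    have hDmem : (ν' / (N : ℝ)) * (∑ i, phiStar ((f i - l) / ν')) + l + ν' * ρ ∈ Dset :=
      ⟨l, ν', hν'pos, rfl⟩
    have h1 : sInf Dset ≤ (∑ i, q i * f i) - ν' * u := by
      rw [← hdval]; exact csInf_le hDbdd hDmem
    have h2 : (∑ i, q i * f i) - ν' * u ≤ pert N f ρ 0 + (ν0 - ν') * u := by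
      have := le_trans hqf hchain; linarith [this]
    have h3 : (ν0 - ν') * u ≤ ε / 2 := by
      have hε2 : ν0 - ν' = -(ε / (2 * ρ)) := by rw [hν']; ring
      rw [hε2]
      have hcase : -(ε / (2 * ρ)) * u ≤ (ε / (2 * ρ)) * ρ := by
        rcases le_or_gt 0 u with h | h
        · have : -(ε / (2 * ρ)) * u ≤ 0 := by
            apply mul_nonpos_of_nonpos_of_nonneg _ h
            have : 0 < ε / (2 * ρ) := by positivity
            linarith
          have : 0 ≤ (ε / (2 * ρ)) * ρ := by positivity
          linarith
        · have hpos : 0 < ε / (2 * ρ) := by positivity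
          have : -u ≤ ρ := by linarith
          calc -(ε / (2 * ρ)) * u = (ε / (2 * ρ)) * (-u) := by ring
            _ ≤ (ε / (2 * ρ)) * ρ := mul_le_mul_of_nonneg_left this hpos.le
      have : (ε / (2 * ρ)) * ρ = ε / 2 := by field_simp
      linarith
    rw [hP0]
    clear_value ν' u dq
    linarith
end

section
/- Let N ≥ 1, let f_1, …, f_N be real numbers, let E = (1/N) Σ_{i=1}^N f_i and V = (1/N) Σ_{i=1}^N (f_i − E)², and assume V > 0. For ρ > 0, the function G(λ, ν) = (1/N) Σ_{i=1}^N [ (1/(2ν))·(f_i − λ)² + f_i ] + νρ over λ ∈ ℝ, ν > 0 attains its infimum at λ* = E and ν* = √(V/(2ρ)), and the minimum value is E + √(2ρV). -/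
open Finset

/-- The dual objective `G(λ, ν)` of the hard-constrained χ²-divergence DRO problem
attains its infimum over `λ ∈ ℝ`, `ν > 0` at `λ* = E`, `ν* = √(V/(2ρ))`,
with minimum value `E + √(2ρV)`. -/
theorem dro_dual_objective_min
    (N : ℕ) (hN : 1 ≤ N) (f : Fin N → ℝ) (E V ρ : ℝ)
    (hE : E = (1 / (N : ℝ)) * ∑ i, f i)
    (hV : V = (1 / (N : ℝ)) * ∑ i, (f i - E) ^ 2)
    (hVpos : 0 < V) (hρ : 0 < ρ)
    (G : ℝ → ℝ → ℝ)
    (hG : ∀ l ν, G l ν =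
      (1 / (N : ℝ)) * (∑ i, ((1 / (2 * ν)) * (f i - l) ^ 2 + f i)) + ν * ρ) :
    G E (Real.sqrt (V / (2 * ρ))) = E + Real.sqrt (2 * ρ * V) ∧
      ∀ l ν, 0 < ν → G E (Real.sqrt (V / (2 * ρ))) ≤ G l ν := by
  have hN0 : (0 : ℝ) < N := by exact_mod_cast Nat.lt_of_lt_of_le Nat.zero_lt_one hN
  have hNne : (N : ℝ) ≠ 0 := ne_of_gt hN0
  have hsum0 : ∑ i, (f i - E) = 0 := by
    rw [Finset.sum_sub_distrib, Finset.sum_const, Finset.card_fin]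
    rw [hE, nsmul_eq_mul]; field_simp; ring
  have hkey : ∀ l : ℝ, (1 / (N : ℝ)) * ∑ i, (f i - l) ^ 2 = V + (E - l) ^ 2 := by
    intro l
    have hexp : ∑ i, (f i - l) ^ 2
        = ∑ i, ((f i - E) ^ 2 + 2 * (E - l) * (f i - E) + (E - l) ^ 2) :=
      Finset.sum_congr rfl (fun i _ => by ring)
    rw [hexp, Finset.sum_add_distrib, Finset.sum_add_distrib, ← Finset.mul_sum,
      hsum0, mul_zero, add_zero, Finset.sum_const, Finset.card_fin, nsmul_eq_mul]
    have hVN : ∑ i, (f i - E) ^ 2 = (N : ℝ) * V := by rw [hV]; field_simp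
    rw [hVN]; field_simp
  have hGform : ∀ l ν : ℝ, G l ν = (1 / (2 * ν)) * (V + (E - l) ^ 2) + E + ν * ρ := by
    intro l ν
    rw [hG, Finset.sum_add_distrib, ← Finset.mul_sum, mul_add]
    linear_combination (1 / (2 * ν)) * hkey l - hE
  set s := Real.sqrt (V / (2 * ρ)) with hs
  have hV2ρ : 0 ≤ V / (2 * ρ) := by positivity
  have hs2 : s ^ 2 = V / (2 * ρ) := Real.sq_sqrt hV2ρ
  have hspos : 0 < s := Real.sqrt_pos.mpr (by positivity)
  have hVs : V = 2 * ρ * s ^ 2 := by rw [hs2]; field_simp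
  have hsqrt : Real.sqrt (2 * ρ * V) = 2 * ρ * s := by
    rw [show 2 * ρ * V = (2 * ρ) ^ 2 * (V / (2 * ρ)) by field_simp,
      Real.sqrt_mul (sq_nonneg _), Real.sqrt_sq (by positivity : (0:ℝ) ≤ 2 * ρ)]
  constructor
  · rw [hGform, hsqrt]
    rw [show (E - E) ^ 2 = 0 by ring, add_zero]
    rw [hVs]; field_simp; ring
  · intro l ν hν
    rw [hGform, hGform]
    rw [show (E - E) ^ 2 = 0 by ring, add_zero]
    have h1 : 0 ≤ (E - l) ^ 2 := sq_nonneg _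
    have h2 : 0 ≤ (s - ν) ^ 2 := sq_nonneg _
    have hνpos := hν
    rw [hVs]
    have hineq : (1 / (2 * s)) * (2 * ρ * s ^ 2) + s * ρ
        ≤ (1 / (2 * ν)) * (2 * ρ * s ^ 2 + (E - l) ^ 2) + ν * ρ := by
      rw [div_mul_eq_mul_div, div_mul_eq_mul_div, one_mul, one_mul,
        div_add' _ _ _ (by positivity), div_add' _ _ _ (by positivity)]
      rw [div_le_div_iff₀ (by positivity) (by positivity)]
      nlinarith [mul_pos hspos hν, sq_nonneg (s - ν)]
    linarith
end

section
/- Let ℓ(x; ξ) = ξ − (ξ − 1)x² with ξ ranging over Ξ = {−0.8, −0.4, 0, 0.4, 0.8} and nominal probabilities p_i = 1/5. Let δ ≥ 0 and let φ: [0, ∞) → [0, ∞] be any function with φ(1) = 0, and define the penalized distributionally robust objective Ψ(x) = sup over q in the probability simplex Δ^5 of [ Σ_{i=1}^5 q_i ℓ(x; ξ_i) − δ Σ_{i=1}^5 (1/5) φ(5 q_i) ]. Then Ψ(0) < Ψ(x) for every x ∈ (0, 1]; in particular, x = 0 is the unique minimizer of Ψ over [0, 1], for every choice of δ ≥ 0.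 -/
open Finset
open scoped ENNReal

/-- The illustrative cost function `ℓ(x; ξ) = ξ − (ξ − 1)x²`. -/
noncomputable def ell (x ξ : ℝ) : ℝ := ξ - (ξ - 1) * x ^ 2

/-- The support `Ξ = {−0.8, −0.4, 0, 0.4, 0.8}`. -/
noncomputable def Xi : Fin 5 → ℝ := ![-0.8, -0.4, 0, 0.4, 0.8]

/-- The penalty term. -/
noncomputable def pen (δ : ℝ) (φ : ℝ → ℝ≥0∞) (q : Fin 5 → ℝ) : ℝ≥0∞ :=
  (ENNReal.ofReal δ) * ∑ i, (1 / 5 : ℝ≥0∞) * φ (5 * q i)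

/-- The feasible-values set appearing inside the `sSup`. -/
noncomputable def Sset (δ : ℝ) (φ : ℝ → ℝ≥0∞) (x : ℝ) : Set ℝ :=
  {y : ℝ | ∃ q : Fin 5 → ℝ,
    (∀ i, 0 ≤ q i) ∧ (∑ i, q i = 1) ∧
    (y : EReal) = ((∑ i, q i * ell x (Xi i) : ℝ) : EReal) -
      (((ENNReal.ofReal δ) * ∑ i, (1 / 5 : ℝ≥0∞) * φ (5 * q i) : ℝ≥0∞) : EReal)}

lemma memS {δ : ℝ} {φ : ℝ → ℝ≥0∞} {x y : ℝ} :
    y ∈ Sset δ φ x ↔ ∃ q : Fin 5 → ℝ,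
      (∀ i, 0 ≤ q i) ∧ (∑ i, q i = 1) ∧ pen δ φ q ≠ ⊤ ∧
      y = (∑ i, q i * ell x (Xi i)) - (pen δ φ q).toReal := by
  constructor
  · rintro ⟨q, hq0, hq1, hy⟩
    refine ⟨q, hq0, hq1, ?_⟩
    set B : ℝ≥0∞ := pen δ φ q with hBdef
    have hy' : (y : EReal) = ((∑ i, q i * ell x (Xi i) : ℝ) : EReal) - (B : EReal) := hy
    rcases eq_or_ne B ⊤ with hB | hB
    · exfalso
      rw [hB] at hy'
      simp [EReal.sub_top] at hy'
    · refine ⟨hB, ?_⟩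
      have hB' : ((B.toReal : ℝ) : EReal) = (B : EReal) := by
        rw [← EReal.toReal_coe_ennreal]
        exact EReal.coe_toReal (by simpa using hB) (EReal.coe_ennreal_ne_bot B)
      rw [← hB', ← EReal.coe_sub] at hy'
      exact_mod_cast hy'
  · rintro ⟨q, hq0, hq1, hB, hy⟩
    refine ⟨q, hq0, hq1, ?_⟩
    have hB' : (((pen δ φ q).toReal : ℝ) : EReal) = ((pen δ φ q : ℝ≥0∞) : EReal) := by
      rw [← EReal.toReal_coe_ennreal]
      exact EReal.coe_toReal (by simpa using hB) (EReal.coe_ennreal_ne_bot _)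
    have : (y : EReal) = ((∑ i, q i * ell x (Xi i) : ℝ) : EReal) -
        (((pen δ φ q).toReal : ℝ) : EReal) := by
      rw [← EReal.coe_sub]; exact_mod_cast congrArg (fun t : ℝ => (t : EReal)) hy
    rw [hB'] at this
    exact this

lemma sum_le_three {x : ℝ} (hx0 : 0 ≤ x) (hx1 : x ≤ 1) (q : Fin 5 → ℝ)
    (hq0 : ∀ i, 0 ≤ q i) (hq1 : ∑ i, q i = 1) :
    ∑ i, q i * ell x (Xi i) ≤ 3 := by
  have h2 : (0:ℝ) ≤ 1 - x ^ 2 := by nlinarith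
  simp only [Fin.sum_univ_five, ell, Xi] at hq1 ⊢
  norm_num [Matrix.cons_val_two, Matrix.cons_val_three, Matrix.cons_val_four, Matrix.vecHead, Matrix.vecTail] at hq1 ⊢
  nlinarith [mul_nonneg (hq0 0) h2, mul_nonneg (hq0 1) h2, mul_nonneg (hq0 2) h2,
    mul_nonneg (hq0 3) h2, mul_nonneg (hq0 4) h2, hq0 0, hq0 1, hq0 2, hq0 3, hq0 4]

lemma gain {x : ℝ} (q : Fin 5 → ℝ)
    (hq0 : ∀ i, 0 ≤ q i) (hq1 : ∑ i, q i = 1) :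
    (∑ i, q i * ell 0 (Xi i)) + 0.2 * x ^ 2 ≤ ∑ i, q i * ell x (Xi i) := by
  simp only [Fin.sum_univ_five, ell, Xi] at hq1 ⊢
  norm_num [Matrix.cons_val_two, Matrix.cons_val_three, Matrix.cons_val_four, Matrix.vecHead, Matrix.vecTail] at hq1 ⊢
  nlinarith [mul_nonneg (hq0 0) (sq_nonneg x), mul_nonneg (hq0 1) (sq_nonneg x),
    mul_nonneg (hq0 2) (sq_nonneg x), mul_nonneg (hq0 3) (sq_nonneg x),
    mul_nonneg (hq0 4) (sq_nonneg x)]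

lemma pen_uniform (δ : ℝ) (φ : ℝ → ℝ≥0∞) (hφ1 : φ 1 = 0) :
    pen δ φ (fun _ => (1/5 : ℝ)) = 0 := by
  have : (5 : ℝ) * (1/5 : ℝ) = 1 := by norm_num
  simp [pen, this, hφ1]

lemma uniform_mem (δ : ℝ) (φ : ℝ → ℝ≥0∞) (hφ1 : φ 1 = 0) (x : ℝ) :
    (∑ i, (1/5 : ℝ) * ell x (Xi i)) ∈ Sset δ φ x := by
  rw [memS]
  refine ⟨fun _ => (1/5 : ℝ), fun i => by norm_num, by norm_num [Fin.sum_univ_five], ?_, ?_⟩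
  · rw [pen_uniform δ φ hφ1]; simp
  · rw [pen_uniform δ φ hφ1]; simp

lemma bdd (δ : ℝ) (φ : ℝ → ℝ≥0∞) {x : ℝ} (hx0 : 0 ≤ x) (hx1 : x ≤ 1) :
    BddAbove (Sset δ φ x) := by
  refine ⟨3, fun y hy => ?_⟩
  rw [memS] at hy
  obtain ⟨q, hq0, hq1, hB, hy⟩ := hy
  have := sum_le_three hx0 hx1 q hq0 hq1
  have ht : 0 ≤ (pen δ φ q).toReal := ENNReal.toReal_nonneg
  linarith [hy ▸ (by linarith : (∑ i, q i * ell x (Xi i)) - (pen δ φ q).toReal ≤ 3)]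

/-- For any penalty coefficient `δ ≥ 0` and any divergence generator
`φ : [0,∞) → [0,∞]` with `φ(1) = 0`, the penalized distributionally robust
objective `Ψ` for `ℓ` satisfies `Ψ(0) < Ψ(x)` for all `x ∈ (0, 1]`; in
particular `x = 0` is the unique minimizer of `Ψ` over `[0, 1]`. -/
theorem dro_penalized_unique_minimizer
    (δ : ℝ) (hδ : 0 ≤ δ) (φ : ℝ → ℝ≥0∞) (hφ1 : φ 1 = 0)
    (Ψ : ℝ → ℝ)
    (hΨ : ∀ x, Ψ x = sSup {y : ℝ | ∃ q : Fin 5 → ℝ,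
        (∀ i, 0 ≤ q i) ∧ (∑ i, q i = 1) ∧
        (y : EReal) = ((∑ i, q i * ell x (Xi i) : ℝ) : EReal) -
          (((ENNReal.ofReal δ) * ∑ i, (1 / 5 : ℝ≥0∞) * φ (5 * q i) : ℝ≥0∞) : EReal)}) :
    (∀ x ∈ Set.Ioc (0 : ℝ) 1, Ψ 0 < Ψ x) ∧
    (∀ x ∈ Set.Icc (0 : ℝ) 1, Ψ 0 ≤ Ψ x ∧ (Ψ x = Ψ 0 → x = 0)) := by
  have hΨ' : ∀ x, Ψ x = sSup (Sset δ φ x) := hΨ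
  have key : ∀ x ∈ Set.Ioc (0 : ℝ) 1, Ψ 0 + 0.2 * x ^ 2 ≤ Ψ x := by
    rintro x ⟨hx0, hx1⟩
    rw [hΨ' 0, hΨ' x]
    have hbdd := bdd δ φ (le_of_lt hx0) hx1
    have hne0 : (Sset δ φ 0).Nonempty := ⟨_, uniform_mem δ φ hφ1 0⟩
    have h : ∀ y ∈ Sset δ φ 0, y + 0.2 * x ^ 2 ≤ sSup (Sset δ φ x) := by
      intro y hy
      rw [memS] at hy
      obtain ⟨q, hq0, hq1, hB, hy⟩ := hy
      have hmem' : ((∑ i, q i * ell x (Xi i)) - (pen δ φ q).toReal) ∈ Sset δ φ x :=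
        memS.2 ⟨q, hq0, hq1, hB, rfl⟩
      have hle := le_csSup hbdd hmem'
      have hg := gain (x := x) q hq0 hq1
      linarith
    have := csSup_le (a := sSup (Sset δ φ x) - 0.2 * x ^ 2) hne0 (fun y hy => by linarith [h y hy])
    linarith
  constructor
  · rintro x ⟨hx0, hx1⟩
    have := key x ⟨hx0, hx1⟩
    nlinarith
  · rintro x ⟨hx0, hx1⟩
    rcases eq_or_lt_of_le hx0 with h0 | h0
    · constructor
      · rw [← h0]
      · intro _; exact h0.symm
    · have := key x ⟨h0, hx1⟩
      constructor
      · nlinarith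
      · intro heq; nlinarith
end
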